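/- Let (E, Σ, P) be a probability space whose σ-algebra is countably generated, and let h : E × E → ℝ be a bounded measurable function. Then for every v in the essential range of h with respect to P ⊗ P and every ε > 0, there exist measurable sets E₁, E₂ ⊆ E with P(E₁) > 0 and P(E₂) > 0 such that | v − (1/(P(E₁)·P(E₂))) ∫_{E₁ × E₂} h d(P⊗P) | ≤ ε; equivalently, writing g_i = (1/P(E_i))·1_{E_i} ∈ L²(E, P), the pairing ⟨g₁, H g₂⟩ of the integral operator H with kernel h is within ε of v. -/

import Mathlib

open MeasureTheory Set

section EssentialRangeAux

variable {E : Type*} [MeasurableSpace E]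

/-- The family of finite unions of measurable rectangles. -/
def rectAlg (E : Type*) [MeasurableSpace E] : Set (Set (E × E)) :=
  {s | ∃ T : Finset (Set E × Set E), (∀ p ∈ T, MeasurableSet p.1 ∧ MeasurableSet p.2) ∧
    s = ⋃ p ∈ T, p.1 ×ˢ p.2}

lemma rectAlg_inter {s t : Set (E × E)} (hs : s ∈ rectAlg E) (ht : t ∈ rectAlg E) :
    s ∩ t ∈ rectAlg E := by
  classical
  obtain ⟨T₁, hT₁, rfl⟩ := hs
  obtain ⟨T₂, hT₂, rfl⟩ := ht
  refine ⟨(T₁ ×ˢ T₂).image (fun q => (q.1.1 ∩ q.2.1, q.1.2 ∩ q.2.2)), ?_, ?_⟩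
  · rintro p hp
    simp only [Finset.mem_image, Finset.mem_product] at hp
    obtain ⟨⟨a, b⟩, ⟨ha, hb⟩, rfl⟩ := hp
    exact ⟨((hT₁ a ha).1).inter ((hT₂ b hb).1), ((hT₁ a ha).2).inter ((hT₂ b hb).2)⟩
  · ext z
    constructor
    · rintro ⟨hz1, hz2⟩
      rw [mem_iUnion₂] at hz1 hz2 ⊢
      obtain ⟨a, ha, hza⟩ := hz1
      obtain ⟨b, hb, hzb⟩ := hz2
      refine ⟨(a.1 ∩ b.1, a.2 ∩ b.2), ?_, ?_⟩
      · exact Finset.mem_image.2 ⟨(a, b), Finset.mem_product.2 ⟨ha, hb⟩, rfl⟩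
      · exact ⟨⟨hza.1, hzb.1⟩, ⟨hza.2, hzb.2⟩⟩
    · intro hz
      rw [mem_iUnion₂] at hz
      obtain ⟨p, hp, hzp⟩ := hz
      obtain ⟨⟨a, b⟩, hab, rfl⟩ := Finset.mem_image.1 hp
      obtain ⟨ha, hb⟩ := Finset.mem_product.1 hab
      refine ⟨mem_iUnion₂.2 ⟨a, ha, ⟨hzp.1.1, hzp.2.1⟩⟩, mem_iUnion₂.2 ⟨b, hb, ⟨hzp.1.2, hzp.2.2⟩⟩⟩

lemma isSetAlgebra_rectAlg : IsSetAlgebra (rectAlg E) := by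
  classical
  constructor
  · exact ⟨∅, by simp, by simp⟩
  · -- compl
    rintro s ⟨T, hT, rfl⟩
    induction T using Finset.induction with
    | empty =>
      refine ⟨{(univ, univ)}, by simp, ?_⟩
      simp [univ_prod_univ]
    | @insert q T hq ih =>
      have hmem : ∀ p ∈ T, MeasurableSet p.1 ∧ MeasurableSet p.2 :=
        fun p hp => hT p (Finset.mem_insert_of_mem hp)
      have hqm := hT q (Finset.mem_insert_self q T)
      rw [Finset.set_biUnion_insert, compl_union]
      refine rectAlg_inter ?_ (ih hmem)
      refine ⟨{(q.1ᶜ, univ), (univ, q.2ᶜ)}, ?_, ?_⟩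
      · intro p hp
        simp only [Finset.mem_insert, Finset.mem_singleton] at hp
        rcases hp with rfl | rfl
        · exact ⟨hqm.1.compl, MeasurableSet.univ⟩
        · exact ⟨MeasurableSet.univ, hqm.2.compl⟩
      · rw [compl_prod_eq_union, Finset.set_biUnion_insert]
        simp
  · -- union
    rintro s t ⟨T₁, hT₁, rfl⟩ ⟨T₂, hT₂, rfl⟩
    classical
    refine ⟨T₁ ∪ T₂, ?_, ?_⟩
    · intro p hp
      rcases Finset.mem_union.1 hp with hp | hp
      exacts [hT₁ p hp, hT₂ p hp]
    · rw [Finset.set_biUnion_union]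

lemma generateFrom_rectAlg :
    MeasurableSpace.generateFrom (rectAlg E) = Prod.instMeasurableSpace := by
  refine le_antisymm ?_ ?_
  · rw [MeasurableSpace.generateFrom_le_iff]
    rintro s ⟨T, hT, rfl⟩
    exact T.measurableSet_biUnion (fun p hp => ((hT p hp).1).prod ((hT p hp).2))
  · rw [← generateFrom_prod]
    refine MeasurableSpace.generateFrom_mono ?_
    rintro s ⟨A, hA, B, hB, rfl⟩
    exact ⟨{(A, B)}, by simpa using ⟨hA, hB⟩, by simp⟩

/-- The atom of the grid generated by the sets `g p`, `p ∈ T`, indexed by the collection `F`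
of the sets that contain the atom. -/
def gridAtom (T : Finset (Set E × Set E)) (g : Set E × Set E → Set E)
    (F : Finset (Set E × Set E)) : Set E :=
  {x | ∀ p ∈ T, (x ∈ g p ↔ p ∈ F)}

section
variable {T : Finset (Set E × Set E)} {g : Set E × Set E → Set E}

lemma measurableSet_gridAtom (hg : ∀ p ∈ T, MeasurableSet (g p))
    (F : Finset (Set E × Set E)) : MeasurableSet (gridAtom T g F) := by
  classical
  have : gridAtom T g F = ⋂ p ∈ T, (if p ∈ F then g p else (g p)ᶜ) := by
    ext x
    simp only [gridAtom, mem_setOf_eq, mem_iInter]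
    refine forall₂_congr fun p hp => ?_
    by_cases hpF : p ∈ F <;> simp [hpF]
  rw [this]
  exact T.measurableSet_biInter fun p hp => by
    by_cases hpF : p ∈ F <;> simp [hpF, hg p hp, (hg p hp).compl]

omit [MeasurableSpace E] in
lemma mem_gridAtom_filter (x : E) [∀ p, Decidable (x ∈ g p)] :
    x ∈ gridAtom T g (T.filter (fun p => x ∈ g p)) := by
  intro p hp
  simp [Finset.mem_filter, hp]

omit [MeasurableSpace E] in
lemma gridAtom_disjoint {F F' : Finset (Set E × Set E)}
    (hF : F ⊆ T) (hF' : F' ⊆ T) (hne : F ≠ F') :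
    Disjoint (gridAtom T g F) (gridAtom T g F') := by
  rw [disjoint_left]
  intro x hx hx'
  refine hne (Finset.ext fun p => ?_)
  constructor
  · intro hpF
    exact (hx' p (hF hpF)).1 ((hx p (hF hpF)).2 hpF)
  · intro hpF'
    exact (hx p (hF' hpF')).1 ((hx' p (hF' hpF')).2 hpF')

end

open scoped Classical in
/-- A finite union of measurable rectangles decomposes as the disjoint union of the grid atoms
it contains; consequence for measures of intersections. -/
lemma rect_decomp (μ : Measure (E × E)) {T : Finset (Set E × Set E)}
    (hT : ∀ p ∈ T, MeasurableSet p.1 ∧ MeasurableSet p.2)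
    {X : Set (E × E)} (hX : MeasurableSet X) :
    μ ((⋃ p ∈ T, p.1 ×ˢ p.2) ∩ X) =
      ∑ q ∈ (T.powerset ×ˢ T.powerset).filter
          (fun q => gridAtom T Prod.fst q.1 ×ˢ gridAtom T Prod.snd q.2 ⊆ ⋃ p ∈ T, p.1 ×ˢ p.2),
        μ ((gridAtom T Prod.fst q.1 ×ˢ gridAtom T Prod.snd q.2) ∩ X) := by
  classical
  set U : Set (E × E) := ⋃ p ∈ T, p.1 ×ˢ p.2 with hU
  set R : Finset (Set E × Set E) × Finset (Set E × Set E) → Set (E × E) :=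
    fun q => gridAtom T Prod.fst q.1 ×ˢ gridAtom T Prod.snd q.2 with hR
  set G := (T.powerset ×ˢ T.powerset).filter (fun q => R q ⊆ U) with hG
  have hdecomp : U ∩ X = ⋃ q ∈ G, R q ∩ X := by
    ext z
    constructor
    · rintro ⟨hzU, hzX⟩
      have hzU' := hzU
      rw [hU, mem_iUnion₂] at hzU'
      obtain ⟨p, hp, hzp⟩ := hzU'
      refine mem_iUnion₂.2 ⟨(T.filter (fun p => z.1 ∈ p.1), T.filter (fun p => z.2 ∈ p.2)),
        ?_, ?_, hzX⟩
      · rw [hG, Finset.mem_filter]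
        refine ⟨Finset.mem_product.2 ⟨Finset.mem_powerset.2 (T.filter_subset _),
          Finset.mem_powerset.2 (T.filter_subset _)⟩, ?_⟩
        rintro ⟨w1, w2⟩ ⟨hw1, hw2⟩
        refine mem_iUnion₂.2 ⟨p, hp, ?_, ?_⟩
        · exact (hw1 p hp).2 (Finset.mem_filter.2 ⟨hp, hzp.1⟩)
        · exact (hw2 p hp).2 (Finset.mem_filter.2 ⟨hp, hzp.2⟩)
      · exact ⟨mem_gridAtom_filter z.1, mem_gridAtom_filter z.2⟩
    · intro hz
      rw [mem_iUnion₂] at hz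
      obtain ⟨q, hq, hzq, hzX⟩ := hz
      exact ⟨(Finset.mem_filter.1 hq).2 hzq, hzX⟩
  rw [hdecomp]
  refine measure_biUnion_finset ?_ ?_
  · intro q hq q' hq' hne
    have hq1 := Finset.mem_powerset.1 (Finset.mem_product.1 (Finset.mem_filter.1 hq).1).1
    have hq2 := Finset.mem_powerset.1 (Finset.mem_product.1 (Finset.mem_filter.1 hq).1).2
    have hq'1 := Finset.mem_powerset.1 (Finset.mem_product.1 (Finset.mem_filter.1 hq').1).1
    have hq'2 := Finset.mem_powerset.1 (Finset.mem_product.1 (Finset.mem_filter.1 hq').1).2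
    have : Disjoint (R q) (R q') := by
      by_cases h : q.1 = q'.1
      · have h2 : q.2 ≠ q'.2 := fun h2 => hne (Prod.ext h h2)
        exact Set.Disjoint.set_prod_right (gridAtom_disjoint hq2 hq'2 h2) _ _
      · exact Set.Disjoint.set_prod_left (gridAtom_disjoint hq1 hq'1 h) _ _
    exact this.mono inter_subset_left inter_subset_left
  · intro q hq
    exact ((measurableSet_gridAtom (fun p hp => (hT p hp).1) _).prod
      (measurableSet_gridAtom (fun p hp => (hT p hp).2) _)).inter hX

end EssentialRangeAux

/-- Approximation of essential values by pairings against normalized indicators: on a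
probability space with countably generated σ-algebra, for a bounded measurable kernel `h`,
every value `v` in the essential range of `h` (w.r.t. `P ⊗ P`) can be approximated within any
`ε > 0` by the average of `h` over a product set `E₁ × E₂` of positive measure. -/
theorem essential_range_approx {E : Type*} [MeasurableSpace E]
    [MeasurableSpace.CountablyGenerated E]
    (P : Measure E) [IsProbabilityMeasure P]
    (h : E → E → ℝ) (hmeas : Measurable (Function.uncurry h))
    (C : ℝ) (hbdd : ∀ a b, |h a b| ≤ C)
    (v : ℝ) (hv : ∀ δ > (0 : ℝ), 0 < (P.prod P) {p : E × E | |h p.1 p.2 - v| < δ})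
    (ε : ℝ) (hε : 0 < ε) :
    ∃ E₁ E₂ : Set E, MeasurableSet E₁ ∧ MeasurableSet E₂ ∧ 0 < P E₁ ∧ 0 < P E₂ ∧
      |v - (1 / ((P E₁).toReal * (P E₂).toReal)) *
          ∫ p in E₁ ×ˢ E₂, h p.1 p.2 ∂(P.prod P)| ≤ ε := by
  classical
  -- basic bounds
  have hvC : |v| ≤ C := by
    refine le_of_forall_pos_le_add fun δ hδ => ?_
    obtain ⟨p, hp⟩ := nonempty_of_measure_ne_zero (hv δ hδ).ne'
    have hp' : |h p.1 p.2 - v| < δ := hp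
    have : |v| ≤ |h p.1 p.2| + |h p.1 p.2 - v| := by
      have := abs_sub_abs_le_abs_sub (h p.1 p.2) v
      have h2 := abs_sub (h p.1 p.2) v
      calc |v| = |h p.1 p.2 - (h p.1 p.2 - v)| := by ring_nf
        _ ≤ |h p.1 p.2| + |h p.1 p.2 - v| := abs_sub _ _
    linarith [hbdd p.1 p.2]
  have hC0 : 0 ≤ C := le_trans (abs_nonneg v) hvC
  -- the set of near-`v` values
  set S : Set (E × E) := {p | |h p.1 p.2 - v| < ε / 2} with hSdef
  have hSmeas : MeasurableSet S := by
    have hm : Measurable fun p : E × E => |h p.1 p.2 - v| :=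
      ((hmeas.sub measurable_const).abs)
    exact measurableSet_lt hm measurable_const
  have hμS : 0 < (P.prod P) S := hv (ε / 2) (half_pos hε)
  set m₀ := ((P.prod P) S).toReal with hm₀def
  have hm₀pos : 0 < m₀ := ENNReal.toReal_pos hμS.ne' (measure_ne_top _ S)
  set η := min (m₀ / 2) (m₀ * ε / (8 * C + 4)) with hηdef
  have hηpos : 0 < η := lt_min (by positivity) (by positivity)
  -- approximate S by a finite union of rectangles
  obtain ⟨U, hU𝒜, hUsd⟩ := (Measure.MeasureDense.of_generateFrom_isSetAlgebra_finite
    (μ := P.prod P) isSetAlgebra_rectAlg generateFrom_rectAlg.symm).approx S hSmeas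
    (measure_ne_top _ S) η hηpos
  obtain ⟨T, hT, rfl⟩ := hU𝒜
  set U : Set (E × E) := ⋃ p ∈ T, p.1 ×ˢ p.2 with hUdef
  have hUmeas : MeasurableSet U :=
    T.measurableSet_biUnion (fun p hp => ((hT p hp).1).prod ((hT p hp).2))
  set DU := ((P.prod P) (U \ S)).toReal with hDUdef
  set MU := ((P.prod P) U).toReal with hMUdef
  have hDUnn : 0 ≤ DU := ENNReal.toReal_nonneg
  have hDUη : DU ≤ η := by
    have h1 : (P.prod P) (U \ S) ≤ (P.prod P) (symmDiff S U) := by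
      refine measure_mono ?_
      rw [Set.symmDiff_def]
      exact Set.subset_union_right
    exact ENNReal.toReal_le_of_le_ofReal hηpos.le (le_trans h1 hUsd.le)
  have hMUge : m₀ - η ≤ MU := by
    have hsub : S ⊆ U ∪ symmDiff S U := by
      intro x hx
      by_cases hxU : x ∈ U
      · exact Or.inl hxU
      · exact Or.inr (by rw [Set.symmDiff_def]; exact Or.inl ⟨hx, hxU⟩)
    have h1 : (P.prod P) S ≤ (P.prod P) U + (P.prod P) (symmDiff S U) :=
      le_trans (measure_mono hsub) (measure_union_le _ _)
    have h2 : (P.prod P) S ≤ (P.prod P) U + ENNReal.ofReal η :=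
      le_trans h1 (add_le_add le_rfl hUsd.le)
    have h3 := ENNReal.toReal_mono (ENNReal.add_ne_top.2 ⟨measure_ne_top _ _, ENNReal.ofReal_ne_top⟩) h2
    rw [ENNReal.toReal_add (measure_ne_top _ _) ENNReal.ofReal_ne_top,
      ENNReal.toReal_ofReal hηpos.le] at h3
    linarith
  have hη1 : η ≤ m₀ / 2 := min_le_left _ _
  have hη2 : η ≤ m₀ * ε / (8 * C + 4) := min_le_right _ _
  have hMUpos : 0 < MU := by linarith
  -- decomposition of U into grid atoms
  have key := fun (X : Set (E × E)) (hX : MeasurableSet X) =>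
    rect_decomp (P.prod P) hT (X := X) hX
  set G := (T.powerset ×ˢ T.powerset).filter
    (fun q => gridAtom T Prod.fst q.1 ×ˢ gridAtom T Prod.snd q.2 ⊆ ⋃ p ∈ T, p.1 ×ˢ p.2) with hGdef
  set R : Finset (Set E × Set E) × Finset (Set E × Set E) → Set (E × E) :=
    fun q => gridAtom T Prod.fst q.1 ×ˢ gridAtom T Prod.snd q.2 with hRdef
  have hsum_univ : (P.prod P) U = ∑ q ∈ G, (P.prod P) (R q) := by
    simpa only [Set.inter_univ] using key univ MeasurableSet.univ
  have hsum_diff : (P.prod P) (U \ S) = ∑ q ∈ G, (P.prod P) (R q \ S) := by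
    simpa [← Set.diff_eq] using key Sᶜ hSmeas.compl
  have hfsum : ∑ q ∈ G, ((P.prod P) (R q)).toReal = MU := by
    rw [hMUdef, hsum_univ, ENNReal.toReal_sum (fun q _ => measure_ne_top _ _)]
  have hdsum : ∑ q ∈ G, ((P.prod P) (R q \ S)).toReal = DU := by
    rw [hDUdef, hsum_diff, ENNReal.toReal_sum (fun q _ => measure_ne_top _ _)]
  -- pigeonhole: select a good atom rectangle
  have hsel : ∃ q ∈ G, 0 < ((P.prod P) (R q)).toReal ∧
      ((P.prod P) (R q \ S)).toReal * MU ≤ DU * ((P.prod P) (R q)).toReal := by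
    by_contra hcon
    push_neg at hcon
    have hle : ∀ q ∈ G, DU * ((P.prod P) (R q)).toReal ≤
        ((P.prod P) (R q \ S)).toReal * MU := by
      intro q hq
      rcases eq_or_lt_of_le (ENNReal.toReal_nonneg : (0:ℝ) ≤ ((P.prod P) (R q)).toReal)
        with h0 | hpos
      · rw [← h0, mul_zero]
        positivity
      · exact (hcon q hq hpos).le
    have hex : ∃ q ∈ G, DU * ((P.prod P) (R q)).toReal <
        ((P.prod P) (R q \ S)).toReal * MU := by
      obtain ⟨q, hq, hqne⟩ := Finset.exists_ne_zero_of_sum_ne_zero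
        (f := fun q => ((P.prod P) (R q)).toReal) (by rw [hfsum]; exact hMUpos.ne')
      exact ⟨q, hq, hcon q hq (lt_of_le_of_ne ENNReal.toReal_nonneg (Ne.symm hqne))⟩
    have hlt := Finset.sum_lt_sum hle hex
    rw [← Finset.mul_sum, ← Finset.sum_mul, hfsum, hdsum] at hlt
    exact lt_irrefl _ hlt
  obtain ⟨q, hqG, hqpos, hqratio⟩ := hsel
  set E₁ := gridAtom T Prod.fst q.1 with hE₁def
  set E₂ := gridAtom T Prod.snd q.2 with hE₂def
  have hE₁meas : MeasurableSet E₁ := measurableSet_gridAtom (fun p hp => (hT p hp).1) _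
  have hE₂meas : MeasurableSet E₂ := measurableSet_gridAtom (fun p hp => (hT p hp).2) _
  have hRq : R q = E₁ ×ˢ E₂ := rfl
  have hprod : (P.prod P) (E₁ ×ˢ E₂) = P E₁ * P E₂ := Measure.prod_prod E₁ E₂
  have hμRpos : 0 < (P.prod P) (R q) := by
    rcases (ENNReal.toReal_pos_iff.1 hqpos) with ⟨h1, _⟩
    exact h1
  have hP₁pos : 0 < P E₁ := by
    rcases eq_or_lt_of_le (zero_le : 0 ≤ P E₁) with h0 | h
    · exfalso
      rw [hRq, hprod, ← h0, zero_mul] at hμRpos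
      exact lt_irrefl _ hμRpos
    · exact h
  have hP₂pos : 0 < P E₂ := by
    rcases eq_or_lt_of_le (zero_le : 0 ≤ P E₂) with h0 | h
    · exfalso
      rw [hRq, hprod, ← h0, mul_zero] at hμRpos
      exact lt_irrefl _ hμRpos
    · exact h
  refine ⟨E₁, E₂, hE₁meas, hE₂meas, hP₁pos, hP₂pos, ?_⟩
  -- the analytic estimate
  set m := ((P.prod P) (R q)).toReal with hmdef
  have hm_eq : (P E₁).toReal * (P E₂).toReal = m := by
    rw [hmdef, hRq, hprod, ENNReal.toReal_mul]
  set d := ((P.prod P) (R q \ S)).toReal with hddef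
  have hdnn : 0 ≤ d := ENNReal.toReal_nonneg
  have hdm : d ≤ m :=
    ENNReal.toReal_mono (measure_ne_top _ _) (measure_mono Set.diff_subset)
  -- integrability
  have hInt : Integrable (fun p : E × E => h p.1 p.2) (P.prod P) := by
    refine ⟨(hmeas.aestronglyMeasurable), ?_⟩
    exact HasFiniteIntegral.of_bounded (C := C)
      (Filter.Eventually.of_forall fun p => by
        simpa [Real.norm_eq_abs] using hbdd p.1 p.2)
  have hIntc : Integrable (fun p : E × E => v - h p.1 p.2) (P.prod P) :=
    (integrable_const v).sub hInt
  -- split the integral over the good rectangle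
  have hdisj : Disjoint (R q ∩ S) (R q \ S) :=
    disjoint_sdiff_self_right.mono_left Set.inter_subset_right
  have hRqmeas : MeasurableSet (R q) := hRq ▸ hE₁meas.prod hE₂meas
  have hsplit : ∫ p in R q, (v - h p.1 p.2) ∂(P.prod P)
      = ∫ p in R q ∩ S, (v - h p.1 p.2) ∂(P.prod P)
        + ∫ p in R q \ S, (v - h p.1 p.2) ∂(P.prod P) := by
    rw [← setIntegral_union hdisj (hRqmeas.diff hSmeas) hIntc.integrableOn hIntc.integrableOn,
      Set.inter_union_diff]
  have h1 : |∫ p in R q ∩ S, (v - h p.1 p.2) ∂(P.prod P)| ≤ (ε / 2) * m := by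
    have hb : ∀ x ∈ R q ∩ S, ‖v - h x.1 x.2‖ ≤ ε / 2 := by
      rintro x ⟨-, hxS⟩
      have : |h x.1 x.2 - v| < ε / 2 := hxS
      rw [Real.norm_eq_abs, abs_sub_comm]
      exact this.le
    have := norm_setIntegral_le_of_norm_le_const (measure_lt_top (P.prod P) _) hb
    rw [Real.norm_eq_abs, measureReal_def] at this
    refine le_trans this ?_
    have : ((P.prod P) (R q ∩ S)).toReal ≤ m :=
      ENNReal.toReal_mono (measure_ne_top _ _) (measure_mono Set.inter_subset_left)
    nlinarith
  have h2 : |∫ p in R q \ S, (v - h p.1 p.2) ∂(P.prod P)| ≤ 2 * C * d := by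
    have hb : ∀ x ∈ R q \ S, ‖v - h x.1 x.2‖ ≤ 2 * C := by
      intro x _
      rw [Real.norm_eq_abs]
      calc |v - h x.1 x.2| ≤ |v| + |h x.1 x.2| := abs_sub _ _
        _ ≤ C + C := add_le_add hvC (hbdd _ _)
        _ = 2 * C := by ring
    have := norm_setIntegral_le_of_norm_le_const (measure_lt_top (P.prod P) _) hb
    rw [Real.norm_eq_abs, measureReal_def] at this
    exact this
  -- the ratio bound
  have hratio : 2 * C * d ≤ (ε / 2) * m := by
    have hkey : 2 * C * DU ≤ (ε / 2) * MU := by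
      have hMU2 : m₀ / 2 ≤ MU := by linarith
      have hη2' : η * (8 * C + 4) ≤ m₀ * ε := (le_div_iff₀ (by positivity)).1 hη2
      have ha1 : 2 * C * DU ≤ 2 * C * η :=
        mul_le_mul_of_nonneg_left hDUη (by positivity)
      have ha3 : (ε / 2) * (m₀ / 2) ≤ (ε / 2) * MU :=
        mul_le_mul_of_nonneg_left hMU2 (by positivity)
      linarith
    nlinarith [mul_le_mul_of_nonneg_left hqratio (by positivity : (0:ℝ) ≤ 2 * C),
      mul_le_mul_of_nonneg_right hkey (ENNReal.toReal_nonneg : (0:ℝ) ≤ m)]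
  -- put everything together
  have hmpos : 0 < m := hqpos
  have hconst : ∫ p in R q, (v : ℝ) ∂(P.prod P) = m * v := by
    rw [setIntegral_const, smul_eq_mul, hmdef, measureReal_def]
  have hIeq : ∫ p in R q, (v - h p.1 p.2) ∂(P.prod P)
      = m * v - ∫ p in R q, h p.1 p.2 ∂(P.prod P) := by
    rw [integral_sub (integrable_const v).integrableOn hInt.integrableOn, hconst]
  have habs : |∫ p in R q, (v - h p.1 p.2) ∂(P.prod P)| ≤ ε * m := by
    rw [hsplit]
    calc |∫ p in R q ∩ S, (v - h p.1 p.2) ∂(P.prod P)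
        + ∫ p in R q \ S, (v - h p.1 p.2) ∂(P.prod P)|
        ≤ |∫ p in R q ∩ S, (v - h p.1 p.2) ∂(P.prod P)|
          + |∫ p in R q \ S, (v - h p.1 p.2) ∂(P.prod P)| := abs_add_le _ _
      _ ≤ (ε / 2) * m + 2 * C * d := add_le_add h1 h2
      _ ≤ (ε / 2) * m + (ε / 2) * m := by linarith
      _ = ε * m := by ring
  have hfinal : |v - (1 / ((P E₁).toReal * (P E₂).toReal)) *
      ∫ p in E₁ ×ˢ E₂, h p.1 p.2 ∂(P.prod P)| ≤ ε := by
    rw [hm_eq]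
    have hRint : ∫ p in E₁ ×ˢ E₂, h p.1 p.2 ∂(P.prod P)
        = ∫ p in R q, h p.1 p.2 ∂(P.prod P) := by rw [hRq]
    rw [hRint]
    have heq : v - (1 / m) * ∫ p in R q, h p.1 p.2 ∂(P.prod P)
        = (1 / m) * ∫ p in R q, (v - h p.1 p.2) ∂(P.prod P) := by
      rw [hIeq]
      field_simp
    rw [heq, abs_mul, abs_of_pos (by positivity : (0:ℝ) < 1 / m)]
    calc (1 / m) * |∫ p in R q, (v - h p.1 p.2) ∂(P.prod P)|
        ≤ (1 / m) * (ε * m) := by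
          exact mul_le_mul_of_nonneg_left habs (by positivity)
      _ = ε := by field_simp
  exact hfinal
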